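/- arXiv:1401.3639 — 2 statements merged into one kernel-verified Lean document; each statement's English description precedes it below -/
import Mathlib

section
/- For all nonnegative integers n and m with 2m ≤ n, sqrt(n!) · 2^(n/2 - 2m) / m! ≤ (2n)^((n-2m)/2). -/
open Nat Real

lemma fact_two_mul_le (m : ℕ) : (2 * m)! ≤ 4 ^ m * (m !) ^ 2 := by
  induction m with
  | zero => simp
  | succ m ih =>
    have h1 : (2 * (m + 1))! = (2 * m + 2) * ((2 * m + 1) * (2 * m)!) := by
      have : 2 * (m + 1) = (2 * m + 1) + 1 := by ring
      rw [this, Nat.factorial_succ, Nat.factorial_succ]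
    rw [h1]
    calc (2 * m + 2) * ((2 * m + 1) * (2 * m)!)
        ≤ (2 * m + 2) * ((2 * m + 2) * (4 ^ m * (m !) ^ 2)) := by
          gcongr
          omega
      _ ≤ 4 ^ (m + 1) * ((m + 1)!) ^ 2 := by
          rw [Nat.factorial_succ]; ring_nf; nlinarith [Nat.zero_le (4 ^ m * (m !) ^ 2)]

lemma key : ∀ k n m : ℕ, n - 2 * m = k → 2 * m ≤ n →
    n ! ≤ 4 ^ m * (m !) ^ 2 * n ^ (n - 2 * m) := by
  intro k
  induction k using Nat.strong_induction_on with
  | _ k ih =>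
    intro n m hk h
    rcases le_or_gt (n - 2 * m) 1 with h2 | h2
    · interval_cases hnm : (n - 2 * m)
      · have hn : n = 2 * m := by omega
        subst hn
        simpa using fact_two_mul_le m
      · have hn : n = 2 * m + 1 := by omega
        subst hn
        rw [Nat.factorial_succ, pow_one]
        calc (2 * m + 1) * (2 * m)! ≤ (2 * m + 1) * (4 ^ m * (m !) ^ 2) := by
              gcongr; exact fact_two_mul_le m
          _ = 4 ^ m * (m !) ^ 2 * (2 * m + 1) := by ring
    · have h' : 2 * (m + 1) ≤ n := by omega
      have hih := ih (n - 2 * (m + 1)) (by omega) n (m + 1) rfl h'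
      have hexp : n - 2 * m = (n - 2 * (m + 1)) + 2 := by omega
      have hsq : 4 * (m + 1) ^ 2 ≤ n ^ 2 := by nlinarith
      calc n ! ≤ 4 ^ (m + 1) * ((m + 1)!) ^ 2 * n ^ (n - 2 * (m + 1)) := hih
        _ = 4 ^ m * (m !) ^ 2 * n ^ (n - 2 * (m + 1)) * (4 * (m + 1) ^ 2) := by
            rw [Nat.factorial_succ, pow_succ 4]; ring
        _ ≤ 4 ^ m * (m !) ^ 2 * n ^ (n - 2 * (m + 1)) * n ^ 2 := by gcongr
        _ = 4 ^ m * (m !) ^ 2 * n ^ (n - 2 * m) := by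
            rw [hexp, pow_add n]; ring

theorem stmt_3 (n m : ℕ) (h : 2 * m ≤ n) :
    Real.sqrt (n !) * (2 : ℝ) ^ ((n : ℝ) / 2 - 2 * m) / (m ! : ℝ) ≤
      (2 * (n : ℝ)) ^ (((n : ℝ) - 2 * m) / 2) := by
  rcases Nat.eq_zero_or_pos n with hn | hn
  · subst hn
    have hm : m = 0 := by omega
    subst hm
    norm_num
  have hnR : (0 : ℝ) < (n : ℝ) := by exact_mod_cast hn
  have hmR : (0 : ℝ) < (m ! : ℝ) := by exact_mod_cast Nat.factorial_pos m
  have hkey : (n ! : ℝ) ≤ 4 ^ m * (m ! : ℝ) ^ 2 * (n : ℝ) ^ (n - 2 * m) := by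
    exact_mod_cast key (n - 2 * m) n m rfl h
  have hA : (0 : ℝ) ≤ (2 : ℝ) ^ m * (m ! : ℝ) * (n : ℝ) ^ (((n : ℝ) - 2 * m) / 2) := by
    positivity
  have hcast : ((n - 2 * m : ℕ) : ℝ) = (n : ℝ) - 2 * m := by
    push_cast [Nat.cast_sub h]; ring
  have hnm : ((n : ℝ) ^ (((n : ℝ) - 2 * m) / 2)) ^ (2 : ℕ) = (n : ℝ) ^ (n - 2 * m) := by
    rw [← Real.rpow_natCast ((n : ℝ) ^ (((n : ℝ) - 2 * m) / 2)) 2, ← Real.rpow_mul hnR.le,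
      ← Real.rpow_natCast (n : ℝ) (n - 2 * m), hcast]
    norm_num
  have h4 : ((2 : ℝ) ^ m) ^ 2 = 4 ^ m := by
    rw [← pow_mul, mul_comm m 2, pow_mul]; norm_num
  have hsq : ((2 : ℝ) ^ m * (m ! : ℝ) * (n : ℝ) ^ (((n : ℝ) - 2 * m) / 2)) ^ 2
      = 4 ^ m * (m ! : ℝ) ^ 2 * (n : ℝ) ^ (n - 2 * m) := by
    rw [mul_pow, mul_pow, hnm, h4]
  have hsqrt : Real.sqrt (n !) ≤ (2 : ℝ) ^ m * (m ! : ℝ) * (n : ℝ) ^ (((n : ℝ) - 2 * m) / 2) := by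
    rw [show ((2 : ℝ) ^ m * (m ! : ℝ) * (n : ℝ) ^ (((n : ℝ) - 2 * m) / 2))
        = Real.sqrt ((2 ^ m * (m ! : ℝ) * (n : ℝ) ^ (((n : ℝ) - 2 * m) / 2)) ^ 2) from
      (Real.sqrt_sq hA).symm]
    exact Real.sqrt_le_sqrt (hsq ▸ hkey)
  rw [div_le_iff₀ hmR]
  have hrhs : (2 * (n : ℝ)) ^ (((n : ℝ) - 2 * m) / 2)
      = (2 : ℝ) ^ (((n : ℝ) - 2 * m) / 2) * (n : ℝ) ^ (((n : ℝ) - 2 * m) / 2) := by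
    rw [Real.mul_rpow (by norm_num) hnR.le]
  calc Real.sqrt (n !) * (2 : ℝ) ^ ((n : ℝ) / 2 - 2 * m)
      ≤ (2 : ℝ) ^ m * (m ! : ℝ) * (n : ℝ) ^ (((n : ℝ) - 2 * m) / 2)
        * (2 : ℝ) ^ ((n : ℝ) / 2 - 2 * m) := by
        gcongr
    _ = (2 * (n : ℝ)) ^ (((n : ℝ) - 2 * m) / 2) * (m ! : ℝ) := by
        have h2pow : (2 : ℝ) ^ (m : ℕ) * (2 : ℝ) ^ ((n : ℝ) / 2 - 2 * m)
            = (2 : ℝ) ^ (((n : ℝ) - 2 * m) / 2) := by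
          rw [← Real.rpow_natCast (2 : ℝ) m, ← Real.rpow_add (by norm_num : (0 : ℝ) < 2)]
          congr 1
          ring
        rw [hrhs, ← h2pow]
        ring
end

section
/- For every complex number z and every nonnegative integer n, the Hermite polynomial satisfies |H_n(z)| ≤ sqrt(n! · 2^n) · exp(sqrt(2n) · |z|). -/
open Nat Finset

/-- The physicists' Hermite polynomial, via its explicit formula, for a complex argument. -/
noncomputable def hermiteC (n : ℕ) (z : ℂ) : ℂ :=
  (n ! : ℂ) * ∑ m ∈ Finset.range (n / 2 + 1),
    (-1) ^ m * (2 * z) ^ (n - 2 * m) / ((m ! : ℂ) * ((n - 2 * m)! : ℂ))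

lemma nat_fact_le (m k : ℕ) : (2*m + k)! ≤ 4^m * (m !)^2 * (2*m+k)^k := by
  have h1 : (2*m)! ≤ 4^m * (m !)^2 := by
    have := Nat.choose_middle_le_pow m
    have h2 : (2*m).choose m ≤ (2*m+1).choose m := Nat.choose_le_choose m (Nat.le_succ _)
    have h3 : (2*m).choose m * (m ! * m !) = (2*m)! := by
      have := Nat.choose_mul_factorial_mul_factorial (show m ≤ 2*m by omega)
      simpa [two_mul, mul_assoc] using this
    calc (2*m)! = (2*m).choose m * (m ! * m !) := h3.symm
      _ ≤ 4^m * (m ! * m !) := by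
          exact Nat.mul_le_mul_right _ (h2.trans this)
      _ = 4^m * (m !)^2 := by ring
  have h4 : (2*m + k)! ≤ (2*m)! * (2*m+k)^k := by
    induction k with
    | zero => simp
    | succ k ih =>
      calc (2*m + (k+1))! = (2*m+k+1) * (2*m+k)! := by
            rw [show 2*m+(k+1) = (2*m+k)+1 by ring, Nat.factorial_succ]
        _ ≤ (2*m+k+1) * ((2*m)! * (2*m+k)^k) := Nat.mul_le_mul_left _ ih
        _ ≤ (2*m+k+1) * ((2*m)! * (2*m+k+1)^k) := by
            exact Nat.mul_le_mul_left _ (Nat.mul_le_mul_left _ (Nat.pow_le_pow_left (by omega) _))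
        _ = (2*m)! * (2*m+(k+1))^(k+1) := by ring
  calc (2*m+k)! ≤ (2*m)! * (2*m+k)^k := h4
    _ ≤ (4^m * (m !)^2) * (2*m+k)^k := Nat.mul_le_mul_right _ h1

lemma nat_sq (m k : ℕ) : ((2*m+k)!)^2 * 2^(2*k) ≤ (2*m+k)! * 2^(2*m+k) * (2*(2*m+k))^k * (m !)^2 := by
  have h : (2*m+k)! ≤ 2^(2*m) * (m !)^2 * (2*m+k)^k := by
    have := nat_fact_le m k
    rwa [show (4:ℕ)^m = 2^(2*m) by rw [show (4:ℕ) = 2^2 from rfl, ← pow_mul]] at this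
  have e : (2:ℕ)^(2*m) * 2^(2*k) = 2^(2*m+k) * 2^k := by
    rw [← pow_add, ← pow_add]; congr 1; ring
  calc ((2*m+k)!)^2 * 2^(2*k) = (2*m+k)! * ((2*m+k)!) * 2^(2*k) := by ring
    _ ≤ (2*m+k)! * (2^(2*m) * (m !)^2 * (2*m+k)^k) * 2^(2*k) := by
        exact Nat.mul_le_mul_right _ (Nat.mul_le_mul_left _ h)
    _ = (2*m+k)! * ((2:ℕ)^(2*m) * 2^(2*k)) * ((2*m+k)^k * (m !)^2) := by ring
    _ = (2*m+k)! * (2^(2*m+k) * 2^k) * ((2*m+k)^k * (m !)^2) := by rw [e]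
    _ = (2*m+k)! * 2^(2*m+k) * (2^k * (2*m+k)^k) * (m !)^2 := by ring
    _ = (2*m+k)! * 2^(2*m+k) * (2*(2*m+k))^k * (m !)^2 := by rw [mul_pow]

lemma sqrt_pow'' (x : ℝ) (hx : 0 ≤ x) (k : ℕ) : Real.sqrt (x^k) = (Real.sqrt x)^k := by
  induction k with
  | zero => simp
  | succ k ih => rw [pow_succ, pow_succ, Real.sqrt_mul (by positivity), ih]

lemma num_le (m k : ℕ) :
    ((2*m+k)! : ℝ) * 2^k ≤
      Real.sqrt (((2*m+k)! : ℝ) * 2^(2*m+k)) * (Real.sqrt (2*(2*m+k)))^k * (m ! : ℝ) := by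
  have hsq : (((2*m+k)! : ℝ) * 2^k)^2 ≤
      (((2*m+k)! : ℝ) * 2^(2*m+k) * (2*(2*m+k))^k) * ((m ! : ℝ))^2 := by
    have h := (Nat.cast_le (α := ℝ)).mpr (nat_sq m k)
    push_cast at h
    have e : (((2*m+k)! : ℝ) * 2^k)^2 = ((2*m+k)! : ℝ)^2 * 2^(2*k) := by
      rw [mul_pow, ← pow_mul, Nat.mul_comm k 2]
    rw [e]
    calc ((2*m+k)! : ℝ)^2 * 2^(2*k)
        ≤ ((2*m+k)! : ℝ) * 2^(2*m+k) * (2*(2*(m:ℝ)+k))^k * ((m ! : ℝ))^2 := h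
      _ = (((2*m+k)! : ℝ) * 2^(2*m+k) * (2*(2*m+k))^k) * ((m ! : ℝ))^2 := by push_cast; ring
  calc ((2*m+k)! : ℝ) * 2^k = Real.sqrt ((((2*m+k)! : ℝ) * 2^k)^2) := by
        rw [Real.sqrt_sq (by positivity)]
    _ ≤ Real.sqrt ((((2*m+k)! : ℝ) * 2^(2*m+k) * (2*(2*m+k))^k) * ((m ! : ℝ))^2) :=
        Real.sqrt_le_sqrt hsq
    _ = Real.sqrt (((2*m+k)! : ℝ) * 2^(2*m+k)) * (Real.sqrt (2*(2*m+k)))^k * (m ! : ℝ) := by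
        rw [Real.sqrt_mul (by positivity), Real.sqrt_mul (by positivity),
          Real.sqrt_sq (by positivity), sqrt_pow'' _ (by positivity)]

lemma term_le (m k : ℕ) (r : ℝ) (hr : 0 ≤ r) :
    ((2*m+k)! : ℝ) * (2*r)^k / ((m ! : ℝ) * (k ! : ℝ)) ≤
      Real.sqrt (((2*m+k)! : ℝ) * 2^(2*m+k)) * (Real.sqrt (2*(2*m+k)) * r)^k / (k ! : ℝ) := by
  have hm : (0:ℝ) < (m ! : ℝ) := by positivity
  have hk : (0:ℝ) < (k ! : ℝ) := by positivity
  rw [mul_pow, mul_pow, div_le_div_iff₀ (by positivity) hk]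
  calc ((2*m+k)! : ℝ) * (2^k * r^k) * (k ! : ℝ)
      = (((2*m+k)! : ℝ) * 2^k) * (r^k * (k ! : ℝ)) := by ring
    _ ≤ (Real.sqrt (((2*m+k)! : ℝ) * 2^(2*m+k)) * (Real.sqrt (2*(2*m+k)))^k * (m ! : ℝ))
          * (r^k * (k ! : ℝ)) := mul_le_mul_of_nonneg_right (num_le m k) (by positivity)
    _ = Real.sqrt (((2*m+k)! : ℝ) * 2^(2*m+k)) * ((Real.sqrt (2*(2*m+k)))^k * r^k)
          * ((m ! : ℝ) * (k ! : ℝ)) := by ring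

lemma term_le' (n m : ℕ) (h : 2*m ≤ n) (r : ℝ) (hr : 0 ≤ r) :
    (n ! : ℝ) * (2*r)^(n-2*m) / ((m ! : ℝ) * ((n-2*m)! : ℝ)) ≤
      Real.sqrt ((n ! : ℝ) * 2^n) * (Real.sqrt (2*n) * r)^(n-2*m) / ((n-2*m)! : ℝ) := by
  have e : 2*m + (n - 2*m) = n := by omega
  have h1 := term_le m (n-2*m) r hr
  rw [e] at h1
  have e2 : (2:ℝ)*(2*(m:ℝ)+((n-2*m : ℕ):ℝ)) = 2*(n:ℝ) := by
    rw [Nat.cast_sub h]; push_cast; ring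
  rw [e2] at h1
  exact h1

theorem stmt_4' (n : ℕ) (z : ℂ) :
    ‖(n ! : ℂ) * ∑ m ∈ Finset.range (n / 2 + 1),
      (-1) ^ m * (2 * z) ^ (n - 2 * m) / ((m ! : ℂ) * ((n - 2 * m)! : ℂ))‖ ≤
      Real.sqrt (n ! * 2 ^ n) * Real.exp (Real.sqrt (2 * n) * ‖z‖) := by
  set r := ‖z‖ with hrdef
  have hr : 0 ≤ r := norm_nonneg z
  set c := Real.sqrt (2*n) * r with hcdef
  have hc : 0 ≤ c := by positivity
  calc ‖(n ! : ℂ) * ∑ m ∈ Finset.range (n / 2 + 1),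
      (-1) ^ m * (2 * z) ^ (n - 2 * m) / ((m ! : ℂ) * ((n - 2 * m)! : ℂ))‖
      ≤ ∑ m ∈ range (n/2+1), (n ! : ℝ) * (2*r)^(n-2*m) / ((m ! : ℝ) * ((n-2*m)! : ℝ)) := by
        rw [norm_mul, Complex.norm_natCast]
        calc (n ! : ℝ) * ‖∑ m ∈ Finset.range (n / 2 + 1),
            (-1) ^ m * (2 * z) ^ (n - 2 * m) / ((m ! : ℂ) * ((n - 2 * m)! : ℂ))‖
            ≤ (n ! : ℝ) * ∑ m ∈ range (n/2+1), (2*r)^(n-2*m) / ((m ! : ℝ) * ((n-2*m)! : ℝ)) := by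
              apply mul_le_mul_of_nonneg_left _ (by positivity)
              refine (norm_sum_le _ _).trans_eq ?_
              refine Finset.sum_congr rfl fun m _ => ?_
              simp [norm_div, norm_mul, norm_pow, Complex.norm_natCast, hrdef]
          _ = ∑ m ∈ range (n/2+1), (n ! : ℝ) * (2*r)^(n-2*m) / ((m ! : ℝ) * ((n-2*m)! : ℝ)) := by
              rw [Finset.mul_sum]
              exact Finset.sum_congr rfl fun m _ => by ring
    _ ≤ ∑ m ∈ range (n/2+1), Real.sqrt ((n ! : ℝ)*2^n) * c^(n-2*m) / ((n-2*m)! : ℝ) :=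
        Finset.sum_le_sum fun m hm => term_le' n m (by simp only [Finset.mem_range] at hm; omega) r hr
    _ = Real.sqrt ((n ! : ℝ)*2^n) * ∑ m ∈ range (n/2+1), c^(n-2*m) / ((n-2*m)! : ℝ) := by
        rw [Finset.mul_sum]
        exact Finset.sum_congr rfl fun m _ => by ring
    _ ≤ Real.sqrt ((n ! : ℝ)*2^n) * Real.exp c := by
        apply mul_le_mul_of_nonneg_left _ (Real.sqrt_nonneg _)
        calc ∑ m ∈ range (n/2+1), c^(n-2*m) / ((n-2*m)! : ℝ)
            = ∑ j ∈ (range (n/2+1)).image (fun m => n - 2*m), c^j / (j ! : ℝ) := by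
              rw [Finset.sum_image]
              intro a ha b hb hab
              simp only [Finset.mem_coe, Finset.mem_range] at ha hb hab
              omega
          _ ≤ ∑ j ∈ range (n+1), c^j / (j ! : ℝ) := by
              apply Finset.sum_le_sum_of_subset_of_nonneg
              · intro j hj
                simp only [Finset.mem_image, Finset.mem_range] at hj ⊢
                obtain ⟨m, _, rfl⟩ := hj
                omega
              · intros; positivity
          _ ≤ Real.exp c := Real.sum_le_exp_of_nonneg hc _

theorem stmt_4 (n : ℕ) (z : ℂ) :
    ‖hermiteC n z‖ ≤
      Real.sqrt (n ! * 2 ^ n) * Real.exp (Real.sqrt (2 * n) * ‖z‖) := by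
  rw [hermiteC]
  exact stmt_4' n z
end
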